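/- Let r, s ≥ 1 be integers and let a₁, …, a_r ∈ ℤˢ be nonzero integer vectors, a_i = (a_{i1}, …, a_{is}). Then for all sufficiently large primes q there exist an invertible 2×2 matrix γ over ℤ/qℤ with γ ≠ 1 which has 1 as an eigenvalue (i.e. there is a nonzero vector v ∈ (ℤ/qℤ)² with γv = v), and vectors τ₀, τ₁, …, τ_s ∈ (ℤ/qℤ)², such that τ₀ lies in the image of the linear map γ − 1 on (ℤ/qℤ)², while for every i = 1, …, r the vector Σ_{j=1}^{s} a_{ij} τ_j does not lie in the image of γ − 1. -/

import Mathlib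

open Polynomial

/-- Nonemptiness of the conjugacy class to which the Chebotarev density theorem is applied in
the proof of Lemma 5.2 of the paper: given nonzero integer vectors `a₁, …, a_r ∈ ℤˢ`, for all
sufficiently large primes `q` there exist an invertible `2×2` matrix `γ ≠ 1` over `ℤ/qℤ` having
`1` as an eigenvalue, and vectors `τ₀, τ₁, …, τ_s ∈ (ℤ/qℤ)²`, such that `τ₀ ∈ Im(γ - 1)` while
`Σⱼ a_{ij} τ_j ∉ Im(γ - 1)` for every `i`. -/
theorem exists_frobenius_class (r s : ℕ) (hr : 1 ≤ r) (hs : 1 ≤ s)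
    (a : Fin r → Fin s → ℤ) (ha : ∀ i, a i ≠ 0) :
    ∃ N : ℕ, ∀ q : ℕ, q.Prime → N ≤ q →
      ∃ γ : Matrix (Fin 2) (Fin 2) (ZMod q),
        IsUnit γ ∧ γ ≠ 1 ∧
        (∃ v : Fin 2 → ZMod q, v ≠ 0 ∧ γ.mulVec v = v) ∧
        ∃ (τ₀ : Fin 2 → ZMod q) (τ : Fin s → Fin 2 → ZMod q),
          (∃ w : Fin 2 → ZMod q, (γ - 1).mulVec w = τ₀) ∧
          ∀ i : Fin r,
            ¬ ∃ w : Fin 2 → ZMod q, (γ - 1).mulVec w = ∑ j, (a i j : ZMod q) • τ j := by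
  classical
  set A : ℕ := Finset.univ.sup (fun p : Fin r × Fin s => (a p.1 p.2).natAbs) with hA
  refine ⟨max (r * s + 1) (A + 1), fun q hq hqN => ?_⟩
  haveI : Fact q.Prime := ⟨hq⟩
  have hq1 : r * s + 1 ≤ q := le_trans (le_max_left _ _) hqN
  have hqA : A + 1 ≤ q := le_trans (le_max_right _ _) hqN
  -- each row is nonzero mod q
  have hrow : ∀ i, ∃ j, (a i j : ZMod q) ≠ 0 := by
    intro i
    obtain ⟨j, hj⟩ := Function.ne_iff.mp (ha i)
    refine ⟨j, fun h => hj ?_⟩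
    rw [ZMod.intCast_zmod_eq_zero_iff_dvd] at h
    have hlt : (a i j).natAbs < q := by
      have : (a i j).natAbs ≤ A := Finset.le_sup (f := fun p : Fin r × Fin s => (a p.1 p.2).natAbs)
        (Finset.mem_univ (i, j))
      omega
    have h2 : q ∣ (a i j).natAbs := Int.natCast_dvd_natCast.mp (by
      simpa [Int.natAbs_dvd, Int.dvd_natAbs] using h)
    have := Nat.le_of_dvd (Int.natAbs_pos.mpr hj) h2
    omega
  -- polynomials
  set P : Fin r → (ZMod q)[X] := fun i => ∑ j : Fin s, C ((a i j : ZMod q)) * X ^ (j : ℕ) with hP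
  have hPcoeff : ∀ i (j : Fin s), (P i).coeff (j : ℕ) = (a i j : ZMod q) := by
    intro i j
    rw [hP]
    simp only [finset_sum_coeff, coeff_C_mul, coeff_X_pow]
    rw [Finset.sum_eq_single j]
    · simp
    · intro b _ hb
      have : (j : ℕ) ≠ (b : ℕ) := fun h => hb (Fin.ext h.symm)
      simp [this]
    · simp
  have hPne : ∀ i, P i ≠ 0 := by
    intro i h
    obtain ⟨j, hj⟩ := hrow i
    apply hj
    rw [← hPcoeff i j, h, coeff_zero]
  have hPdeg : ∀ i, (P i).natDegree ≤ s - 1 := by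
    intro i
    apply natDegree_sum_le_of_forall_le
    intro j _
    refine le_trans (natDegree_C_mul_le _ _) ?_
    simp only [natDegree_X_pow]
    omega
  set Q : (ZMod q)[X] := ∏ i : Fin r, P i with hQ
  have hQne : Q ≠ 0 := Finset.prod_ne_zero_iff.mpr fun i _ => hPne i
  have hQdeg : Q.natDegree < q := by
    have := natDegree_prod_le (Finset.univ : Finset (Fin r)) P
    have h2 : ∑ i : Fin r, (P i).natDegree ≤ r * (s - 1) := by
      calc ∑ i : Fin r, (P i).natDegree ≤ ∑ _i : Fin r, (s - 1) :=
            Finset.sum_le_sum fun i _ => hPdeg i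
        _ = r * (s - 1) := by simp [Finset.sum_const, mul_comm]
    have h3 : Q.natDegree ≤ r * (s - 1) := le_trans this h2
    have h4 : r * (s - 1) + r = r * s := by
      have h5 : s - 1 + 1 = s := by omega
      calc r * (s - 1) + r = r * ((s - 1) + 1) := by ring
        _ = r * s := by rw [h5]
    omega
  obtain ⟨t, ht⟩ := Q.exists_eval_ne_zero_of_natDegree_lt_card hQne (by
    simpa [Cardinal.mk_fintype, ZMod.card] using hQdeg)
  have hPt : ∀ i, (P i).eval t ≠ 0 := by
    intro i hi
    apply ht
    rw [hQ, eval_prod]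
    exact Finset.prod_eq_zero (Finset.mem_univ i) hi
  -- the matrix
  refine ⟨!![1, 1; 0, 1], ?_, ?_, ⟨![1, 0], ?_, ?_⟩,
    0, fun j => ![0, t ^ (j : ℕ)], ⟨0, ?_⟩, ?_⟩
  · exact (Matrix.isUnit_iff_isUnit_det _).mpr (by
      simp [Matrix.det_fin_two_of])
  · intro h
    have := congrFun (congrFun h 0) 1
    simp [Matrix.one_apply] at this
  · intro h
    have := congrFun h 0
    simp at this
  · ext i
    fin_cases i <;> simp [Matrix.mulVec, dotProduct, Fin.sum_univ_two]
  · ext i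
    fin_cases i <;> simp [Matrix.mulVec, dotProduct, Fin.sum_univ_two]
  · intro i ⟨w, hw⟩
    apply hPt i
    have h1 := congrFun hw 1
    simp only [Matrix.sub_mulVec, Matrix.one_mulVec, Pi.sub_apply, Matrix.mulVec,
      dotProduct, Fin.sum_univ_two, Finset.sum_apply, Pi.smul_apply,
      Matrix.cons_val', Matrix.cons_val_zero, Matrix.cons_val_one, Matrix.head_cons,
      Matrix.empty_val', Matrix.cons_val_fin_one, Matrix.head_fin_const,
      smul_eq_mul, mul_zero, mul_one, zero_mul, zero_add, sub_self] at h1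
    rw [hP]
    simp only [eval_finset_sum, eval_mul, eval_C, eval_pow, eval_X]
    have h2 : (0 : ZMod q) = ∑ x : Fin s, (a i x : ZMod q) * t ^ (x : ℕ) := by
      simpa [Matrix.sub_apply, Matrix.one_apply] using h1
    exact h2.symm
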